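/- Let f_n, f, g_n, g be càdlàg functions from [0,∞) to [0,∞) and t_n, t real numbers with t_n, t > 0. Assume: (1) f_n → f in the Skorokhod (J1) sense, with each f_n non-increasing; (2) g_n → g in the Skorokhod (J1) sense; (3) t_n → t; (4) f_n(t_n−) → f(t−), where h(s−) denotes the left limit of h at s. Then glue^{[t_n]}(f_n, g_n) converges to glue^{[t]}(f, g) in the Skorokhod (J1) sense. -/

import Mathlib

open MeasureTheory Filter Set
open scoped ENNReal NNReal

/-- A function is càdlàg on `[0,∞)`: right-continuous at every `t ≥ 0` and
with left limits at every `t > 0`. -/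
def Cadlag (f : ℝ → ℝ) : Prop :=
  (∀ t : ℝ, 0 ≤ t → ContinuousWithinAt f (Set.Ici t) t) ∧
  ∀ t : ℝ, 0 < t → ∃ l : ℝ, Filter.Tendsto f (nhdsWithin t (Set.Iio t)) (nhds l)

/-- Skorokhod (J1) convergence of càdlàg functions from `[0,∞)` to `ℝ`:
there exist continuous strictly increasing bijections `λₙ` of `[0,∞)` such that
`λₙ → id` and `hₙ ∘ λₙ → h` uniformly on every compact set. -/
def SkorokhodTendsto (h : ℕ → ℝ → ℝ) (l : ℝ → ℝ) : Prop :=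
  ∃ lam : ℕ → ℝ → ℝ,
    (∀ n, ContinuousOn (lam n) (Set.Ici 0) ∧ StrictMonoOn (lam n) (Set.Ici 0) ∧
      Set.BijOn (lam n) (Set.Ici 0) (Set.Ici 0)) ∧
    (∀ T : ℝ, 0 < T →
      TendstoUniformlyOn (fun n t => lam n t) id atTop (Set.Icc 0 T)) ∧
    (∀ T : ℝ, 0 < T →
      TendstoUniformlyOn (fun n t => h n (lam n t)) l atTop (Set.Icc 0 T))

/-- `glue^[t](f,g)(s) = f(s)` for `s < t` and `g(s - t)` for `s ≥ t`. -/
noncomputable def glue (f g : ℝ → ℝ) (t : ℝ) : ℝ → ℝ :=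
  fun s => if s < t then f s else g (s - t)


/-- helper: a strictly monotone bijection of `[0,∞)` fixes `0`. -/
lemma strictMonoOn_bijOn_zero {φ : ℝ → ℝ} (hmono : StrictMonoOn φ (Set.Ici 0))
    (hbij : Set.BijOn φ (Set.Ici 0) (Set.Ici 0)) : φ 0 = 0 := by
  have h0 : (0:ℝ) ≤ φ 0 := hbij.mapsTo (le_refl (0:ℝ))
  rcases h0.eq_or_lt with h | h
  · exact h.symm
  · exfalso
    obtain ⟨x, hx, hφx⟩ := hbij.surjOn (show φ 0 / 2 ∈ Set.Ici (0:ℝ) by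
      simp only [Set.mem_Ici]; linarith)
    have hx0 : (0:ℝ) ≤ x := hx
    have hle : φ 0 ≤ φ x := by
      rcases hx0.eq_or_lt with h' | h'
      · rw [← h']
      · exact (hmono (le_refl (0:ℝ)) hx h').le
    rw [hφx] at hle
    linarith

/-- helper: a càdlàg function tends to its left limit from the left. -/
lemma cadlag_tendsto_leftLim {h : ℝ → ℝ}
    (hc : Cadlag h) {x : ℝ} (hx : 0 < x) :
    Filter.Tendsto h (nhdsWithin x (Set.Iio x)) (nhds (Function.leftLim h x)) := by
  obtain ⟨l, hl⟩ := hc.2 x hx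
  rwa [leftLim_eq_of_tendsto hl]

/-- helper: for an antitone càdlàg function, the left limit at `c` is a lower bound
for values at points in `[0, c)`. -/
lemma leftLim_le_of_antitone {h : ℝ → ℝ}
    (hc : Cadlag h)
    (hmono : ∀ s u : ℝ, 0 ≤ s → s ≤ u → h u ≤ h s)
    {x c : ℝ} (hx : 0 ≤ x) (hxc : x < c) : Function.leftLim h c ≤ h x := by
  have hc0 : (0:ℝ) < c := lt_of_le_of_lt hx hxc
  have hl := cadlag_tendsto_leftLim hc hc0
  refine le_of_tendsto hl ?_
  filter_upwards [Ioo_mem_nhdsLT_of_mem (show c ∈ Set.Ioc x c from ⟨hxc, le_rfl⟩)] with y hy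
  exact hmono x y hx hy.1.le

/-- the piecewise time change used in the gluing construction. -/
noncomputable def pwmap (φ ψ : ℝ → ℝ) (c t' τ : ℝ) : ℝ → ℝ :=
  fun s => if s ≤ c then φ s
    else if s ≤ t' then φ c + (s - c) * ((τ - φ c) / (t' - c))
    else τ + ψ (s - t')

section pwmap

variable {φ ψ : ℝ → ℝ} {c t' τ : ℝ}

lemma pwmap_left {s : ℝ} (h : s ≤ c) : pwmap φ ψ c t' τ s = φ s := by
  simp only [pwmap]; rw [if_pos h]

lemma pwmap_mid {s : ℝ} (h1 : ¬ s ≤ c) (h2 : s ≤ t') :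
    pwmap φ ψ c t' τ s = φ c + (s - c) * ((τ - φ c) / (t' - c)) := by
  simp only [pwmap]; rw [if_neg h1, if_pos h2]

lemma pwmap_right {s : ℝ} (h1 : ¬ s ≤ c) (h2 : ¬ s ≤ t') :
    pwmap φ ψ c t' τ s = τ + ψ (s - t') := by
  simp only [pwmap]; rw [if_neg h1, if_neg h2]

lemma pwmap_at_right (hct : c < t') (hψ0 : ψ 0 = 0) :
    pwmap φ ψ c t' τ t' = τ := by
  rw [pwmap_mid (not_le.mpr hct) le_rfl]
  have hne : t' - c ≠ 0 := ne_of_gt (show (0:ℝ) < t' - c by linarith)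
  field_simp
  ring

lemma pwmap_strictMonoOn (h0c : 0 ≤ c) (hct : c < t')
    (hφ : StrictMonoOn φ (Set.Ici 0)) (hψ : StrictMonoOn ψ (Set.Ici 0))
    (hψ0 : ψ 0 = 0) (hφc : φ c < τ) :
    StrictMonoOn (pwmap φ ψ c t' τ) (Set.Ici 0) := by
  have hslpos : 0 < (τ - φ c) / (t' - c) := div_pos (by linarith) (by linarith)
  -- upper bound on [0, t']
  have hub : ∀ x : ℝ, 0 ≤ x → x ≤ t' → pwmap φ ψ c t' τ x ≤ τ := by
    intro x hx0 hxt
    by_cases hxc : x ≤ c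
    · rw [pwmap_left hxc]
      have := hφ.monotoneOn (Set.mem_Ici.mpr hx0) (Set.mem_Ici.mpr h0c) hxc
      linarith
    · rw [pwmap_mid hxc hxt]
      push_neg at hxc
      have h1 : (x - c) * ((τ - φ c) / (t' - c)) ≤ (t' - c) * ((τ - φ c) / (t' - c)) :=
        mul_le_mul_of_nonneg_right (by linarith) hslpos.le
      have hne : t' - c ≠ 0 := ne_of_gt (show (0:ℝ) < t' - c by linarith)
      have h2 : (t' - c) * ((τ - φ c) / (t' - c)) = τ - φ c := by
        field_simp
      linarith
  intro x hx y hy hxy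
  have hx0 : (0:ℝ) ≤ x := hx
  have hy0 : (0:ℝ) ≤ y := hy
  by_cases hyc : y ≤ c
  · have hxc : x ≤ c := (hxy.trans_le hyc).le
    rw [pwmap_left hxc, pwmap_left hyc]
    exact hφ hx hy hxy
  · by_cases hyt : y ≤ t'
    · rw [pwmap_mid hyc hyt]
      push_neg at hyc
      by_cases hxc : x ≤ c
      · rw [pwmap_left hxc]
        have h1 : φ x ≤ φ c := hφ.monotoneOn (Set.mem_Ici.mpr hx0) (Set.mem_Ici.mpr h0c) hxc
        have h2 : 0 < (y - c) * ((τ - φ c) / (t' - c)) := mul_pos (by linarith) hslpos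
        linarith
      · have hxt : x ≤ t' := (hxy.trans_le hyt).le
        rw [pwmap_mid hxc hxt]
        push_neg at hxc
        have h2 : 0 < (y - x) * ((τ - φ c) / (t' - c)) := mul_pos (by linarith) hslpos
        nlinarith
    · rw [pwmap_right hyc hyt]
      push_neg at hyt
      have hψpos : 0 < ψ (y - t') := by
        have := hψ (Set.mem_Ici.mpr (le_refl (0:ℝ))) (Set.mem_Ici.mpr (by linarith : (0:ℝ) ≤ y - t')) (by linarith)
        rwa [hψ0] at this
      by_cases hxt : x ≤ t'
      · have := hub x hx0 hxt
        linarith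
      · rw [pwmap_right (by push_neg at hxt ⊢; linarith) hxt]
        push_neg at hxt
        have := hψ (Set.mem_Ici.mpr (by linarith : (0:ℝ) ≤ x - t'))
          (Set.mem_Ici.mpr (by linarith : (0:ℝ) ≤ y - t')) (by linarith)
        linarith

lemma pwmap_continuousOn (h0c : 0 ≤ c) (hct : c < t')
    (hφ : ContinuousOn φ (Set.Ici 0)) (hψ : ContinuousOn ψ (Set.Ici 0)) (hψ0 : ψ 0 = 0) :
    ContinuousOn (pwmap φ ψ c t' τ) (Set.Ici 0) := by
  have ht'0 : (0:ℝ) < t' := lt_of_le_of_lt h0c hct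
  have hF : Continuous (fun s : ℝ => φ (max s 0)) :=
    hφ.comp_continuous (continuous_id.max continuous_const)
      (fun x => Set.mem_Ici.mpr (le_max_right _ _))
  have hG : Continuous (fun s : ℝ => ψ (max (s - t') 0)) :=
    hψ.comp_continuous ((continuous_id.sub continuous_const).max continuous_const)
      (fun x => Set.mem_Ici.mpr (le_max_right _ _))
  have hlin : Continuous (fun s : ℝ => φ c + (s - c) * ((τ - φ c) / (t' - c))) := by
    continuity
  have hinner : Continuous (fun s : ℝ =>
      if s ≤ t' then φ c + (s - c) * ((τ - φ c) / (t' - c)) else τ + ψ (max (s - t') 0)) := by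
    apply Continuous.if_le hlin (continuous_const.add hG) continuous_id continuous_const
    intro x hx
    have hx' : x = t' := hx
    rw [hx']
    have hne : t' - c ≠ 0 := ne_of_gt (show (0:ℝ) < t' - c by linarith)
    have h2 : (t' - c) * ((τ - φ c) / (t' - c)) = τ - φ c := by field_simp
    simp only [Pi.add_apply, sub_self, max_self, hψ0, add_zero]
    linarith
  have hglob : Continuous (fun s : ℝ =>
      if s ≤ c then φ (max s 0)
      else if s ≤ t' then φ c + (s - c) * ((τ - φ c) / (t' - c)) else τ + ψ (max (s - t') 0)) := by
    apply Continuous.if_le hF hinner continuous_id continuous_const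
    intro x hx
    have hx' : x = c := hx
    rw [hx']
    rw [if_pos hct.le]
    simp [max_eq_left h0c]
  apply hglob.continuousOn.congr
  intro x hx
  have hx0 : (0:ℝ) ≤ x := hx
  by_cases hxc : x ≤ c
  · rw [pwmap_left hxc]
    simp [hxc, max_eq_left hx0]
  · by_cases hxt : x ≤ t'
    · rw [pwmap_mid hxc hxt]
      simp [hxc, hxt]
    · rw [pwmap_right hxc hxt]
      push_neg at hxt
      have : max (x - t') 0 = x - t' := max_eq_left (by linarith)
      simp [hxc, hxt, this, not_le.mpr hxt]

lemma pwmap_bijOn (h0c : 0 ≤ c) (hct : c < t')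
    (hφm : StrictMonoOn φ (Set.Ici 0)) (hφb : Set.BijOn φ (Set.Ici 0) (Set.Ici 0))
    (hψm : StrictMonoOn ψ (Set.Ici 0)) (hψb : Set.BijOn ψ (Set.Ici 0) (Set.Ici 0))
    (hφc : φ c < τ) :
    Set.BijOn (pwmap φ ψ c t' τ) (Set.Ici 0) (Set.Ici 0) := by
  have hφ0 : φ 0 = 0 := strictMonoOn_bijOn_zero hφm hφb
  have hψ0 : ψ 0 = 0 := strictMonoOn_bijOn_zero hψm hψb
  have hmono := pwmap_strictMonoOn h0c hct hφm hψm hψ0 hφc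
  have hv0 : pwmap φ ψ c t' τ 0 = 0 := by rw [pwmap_left h0c, hφ0]
  have hφc0 : (0:ℝ) ≤ φ c := hφb.mapsTo (Set.mem_Ici.mpr h0c)
  have hE : (0:ℝ) < t' - c := by linarith
  refine ⟨?_, hmono.injOn, ?_⟩
  · -- mapsTo
    intro x hx
    have hx0 : (0:ℝ) ≤ x := hx
    rcases hx0.eq_or_lt with h | h
    · rw [← h, hv0]
      exact Set.self_mem_Ici
    · have := hmono (Set.mem_Ici.mpr (le_refl (0:ℝ))) (Set.mem_Ici.mpr hx0) h
      rw [hv0] at this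
      exact Set.mem_Ici.mpr this.le
  · -- surjOn
    intro y hy
    have hy0 : (0:ℝ) ≤ y := hy
    by_cases h1 : y ≤ φ c
    · obtain ⟨x, hx, hφx⟩ := hφb.surjOn (Set.mem_Ici.mpr hy0)
      have hx0 : (0:ℝ) ≤ x := hx
      have hxc : x ≤ c := by
        by_contra hxc
        push_neg at hxc
        have := hφm (Set.mem_Ici.mpr h0c) (Set.mem_Ici.mpr hx0) hxc
        rw [hφx] at this
        linarith
      exact ⟨x, Set.mem_Ici.mpr hx0, by rw [pwmap_left hxc, hφx]⟩
    · push_neg at h1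
      by_cases h2 : y ≤ τ
      · set x := c + (y - φ c) * ((t' - c) / (τ - φ c)) with hxdef
        have hτφ : (0:ℝ) < τ - φ c := by linarith
        have hxc : c < x := by
          have : 0 < (y - φ c) * ((t' - c) / (τ - φ c)) :=
            mul_pos (by linarith) (div_pos hE hτφ)
          rw [hxdef]; linarith
        have hxt : x ≤ t' := by
          have h3 : (y - φ c) * ((t' - c) / (τ - φ c)) ≤ (τ - φ c) * ((t' - c) / (τ - φ c)) :=
            mul_le_mul_of_nonneg_right (by linarith) (div_pos hE hτφ).le
          have h4 : (τ - φ c) * ((t' - c) / (τ - φ c)) = t' - c := by field_simp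
          rw [hxdef]; linarith
        refine ⟨x, Set.mem_Ici.mpr (by linarith), ?_⟩
        rw [pwmap_mid (not_le.mpr hxc) hxt]
        rw [hxdef]
        field_simp
        ring
      · push_neg at h2
        obtain ⟨w, hw, hψw⟩ := hψb.surjOn (Set.mem_Ici.mpr (by linarith : (0:ℝ) ≤ y - τ))
        have hw0 : (0:ℝ) ≤ w := hw
        refine ⟨t' + w, Set.mem_Ici.mpr (by linarith), ?_⟩
        rcases hw0.eq_or_lt with h | h
        · rw [← h, add_zero, pwmap_at_right hct hψ0]
          rw [← h] at hψw
          rw [hψ0] at hψw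
          linarith
        · rw [pwmap_right (by linarith) (by push_neg; linarith)]
          simp only [add_sub_cancel_left]
          rw [hψw]
          ring

end pwmap

/-- gluing lemma for Skorokhod convergence. -/
theorem glue_skorokhod_convergence
    (fseq gseq : ℕ → ℝ → ℝ) (f g : ℝ → ℝ) (tseq : ℕ → ℝ) (t : ℝ)
    (htseq : ∀ n, 0 < tseq n) (ht : 0 < t)
    (hf_nonneg : ∀ s : ℝ, 0 ≤ s → 0 ≤ f s) (hf_cadlag : Cadlag f)
    (hg_nonneg : ∀ s : ℝ, 0 ≤ s → 0 ≤ g s) (hg_cadlag : Cadlag g)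
    (hfseq_nonneg : ∀ n, ∀ s : ℝ, 0 ≤ s → 0 ≤ fseq n s)
    (hfseq_cadlag : ∀ n, Cadlag (fseq n))
    (hgseq_nonneg : ∀ n, ∀ s : ℝ, 0 ≤ s → 0 ≤ gseq n s)
    (hgseq_cadlag : ∀ n, Cadlag (gseq n))
    -- (1) fₙ → f in the Skorokhod sense, each fₙ non-increasing
    (hfseq_mono : ∀ n, ∀ s u : ℝ, 0 ≤ s → s ≤ u → fseq n u ≤ fseq n s)
    (hfconv : SkorokhodTendsto fseq f)
    -- (2) gₙ → g in the Skorokhod sense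
    (hgconv : SkorokhodTendsto gseq g)
    -- (3) tₙ → t
    (htconv : Filter.Tendsto tseq atTop (nhds t))
    -- (4) fₙ(tₙ−) → f(t−)
    (hleft : Filter.Tendsto (fun n => Function.leftLim (fseq n) (tseq n)) atTop
      (nhds (Function.leftLim f t))) :
    SkorokhodTendsto (fun n => glue (fseq n) (gseq n) (tseq n)) (glue f g t) := by
  classical
  obtain ⟨lf, hlf, hlfid, hlffun⟩ := hfconv
  obtain ⟨lg, hlg, hlgid, hlgfun⟩ := hgconv
  have hlf0 : ∀ n, lf n 0 = 0 := fun n => strictMonoOn_bijOn_zero (hlf n).2.1 (hlf n).2.2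
  have hlg0 : ∀ n, lg n 0 = 0 := fun n => strictMonoOn_bijOn_zero (hlg n).2.1 (hlg n).2.2
  have hlfmap : ∀ n, ∀ s : ℝ, 0 ≤ s → 0 ≤ lf n s := fun n s hs => (hlf n).2.2.mapsTo hs
  have hlgmap : ∀ n, ∀ s : ℝ, 0 ≤ s → 0 ≤ lg n s := fun n s hs => (hlg n).2.2.mapsTo hs
  -- f is antitone on [0,∞)
  have hf_anti : ∀ s u : ℝ, 0 ≤ s → s ≤ u → f u ≤ f s := by
    intro s u hs hsu
    have hM : (0:ℝ) < u + 1 := by linarith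
    have h1 := (hlffun (u+1) hM).tendsto_at
      (show u ∈ Set.Icc (0:ℝ) (u+1) from ⟨hs.trans hsu, by linarith⟩)
    have h2 := (hlffun (u+1) hM).tendsto_at
      (show s ∈ Set.Icc (0:ℝ) (u+1) from ⟨hs, by linarith⟩)
    refine le_of_tendsto_of_tendsto' h1 h2 (fun n => ?_)
    exact hfseq_mono n (lf n s) (lf n u) (hlfmap n s hs)
      ((hlf n).2.1.monotoneOn (Set.mem_Ici.mpr hs) (Set.mem_Ici.mpr (hs.trans hsu)) hsu)
  -- sup distortion of lf on [0,t]
  obtain ⟨A, hAdef⟩ : ∃ A : ℕ → ℝ, A = fun n => sSup ((fun s => |lf n s - s|) '' Set.Icc 0 t) :=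
    ⟨_, rfl⟩
  have hAbdd : ∀ n, BddAbove ((fun s => |lf n s - s|) '' Set.Icc 0 t) := by
    intro n
    apply IsCompact.bddAbove_image isCompact_Icc
    exact (((hlf n).1.mono Set.Icc_subset_Ici_self).sub continuousOn_id).abs
  have hAmem : ∀ n, ∀ s ∈ Set.Icc (0:ℝ) t, |lf n s - s| ≤ A n := by
    intro n s hs
    rw [hAdef]
    exact le_csSup (hAbdd n) ⟨s, hs, rfl⟩
  have hA0 : ∀ n, 0 ≤ A n := by
    intro n
    have h := hAmem n 0 ⟨le_rfl, ht.le⟩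
    rw [hlf0 n, sub_zero, abs_zero] at h
    exact h
  have hAtend : Filter.Tendsto A atTop (nhds 0) := by
    rw [Metric.tendsto_atTop]
    intro δ hδ
    obtain ⟨N, hN⟩ := Filter.eventually_atTop.mp
      ((Metric.tendstoUniformlyOn_iff.mp (hlfid t ht)) (δ/2) (by linarith))
    refine ⟨N, fun n hn => ?_⟩
    have hsup : A n ≤ δ/2 := by
      rw [hAdef]
      apply Real.sSup_le _ (by linarith)
      rintro x ⟨s, hs, rfl⟩
      have h := hN n hn s hs
      simp only [id_eq, Real.dist_eq] at h
      calc |lf n s - s| = |s - lf n s| := abs_sub_comm _ _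
        _ ≤ δ/2 := h.le
    rw [Real.dist_eq, sub_zero, abs_of_nonneg (hA0 n)]
    linarith
  have hBtend : Filter.Tendsto (fun n => |tseq n - t|) atTop (nhds 0) := by
    have h := (htconv.sub_const t).abs
    rw [sub_self, abs_zero] at h
    exact h
  obtain ⟨E, hEdef⟩ : ∃ E : ℕ → ℝ, E = fun n => 2*(A n + |tseq n - t|) + 1/((n:ℝ)+1) :=
    ⟨_, rfl⟩
  have hEpos : ∀ n, 0 < E n := by
    intro n
    have h1 := hA0 n
    have h2 : (0:ℝ) ≤ |tseq n - t| := abs_nonneg _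
    have h3 : (0:ℝ) < 1/((n:ℝ)+1) := by positivity
    simp only [hEdef]
    linarith
  have hEtend : Filter.Tendsto E atTop (nhds 0) := by
    have h1 : Filter.Tendsto (fun n : ℕ => 1/((n:ℝ)+1)) atTop (nhds 0) :=
      tendsto_one_div_add_atTop_nhds_zero_nat
    have h2 := ((hAtend.add hBtend).const_mul 2).add h1
    simp only [add_zero, mul_zero] at h2
    rw [hEdef]
    exact h2
  have hEgt : ∀ n, A n + (t - tseq n) < E n := by
    intro n
    have h1 := hA0 n
    have h2 : t - tseq n ≤ |tseq n - t| := by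
      rw [abs_sub_comm]; exact le_abs_self _
    have h3 : (0:ℝ) < 1/((n:ℝ)+1) := by positivity
    have h4 : (0:ℝ) ≤ |tseq n - t| := abs_nonneg _
    simp only [hEdef]
    linarith
  have hgood : ∀ n, E n < t → lf n (t - E n) < tseq n := by
    intro n hn
    have hc : t - E n ∈ Set.Icc (0:ℝ) t := ⟨by linarith, by linarith [hEpos n]⟩
    have h1 := (abs_le.mp (hAmem n (t - E n) hc)).2
    have h2 := hEgt n
    linarith
  obtain ⟨lam, hlamdef⟩ : ∃ lam : ℕ → ℝ → ℝ, lam = fun n =>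
      if E n < t then pwmap (lf n) (lg n) (t - E n) t (tseq n) else id := ⟨_, rfl⟩
  have hlam_good : ∀ n, E n < t → lam n = pwmap (lf n) (lg n) (t - E n) t (tseq n) := by
    intro n hn; simp only [hlamdef, if_pos hn]
  have hlam_bad : ∀ n, ¬ E n < t → lam n = id := by
    intro n hn; simp only [hlamdef, if_neg hn]
  refine ⟨lam, ?_, ?_, ?_⟩
  · -- structural conditions
    intro n
    by_cases hn : E n < t
    · rw [hlam_good n hn]
      have h0c : (0:ℝ) ≤ t - E n := by linarith
      have hct : t - E n < t := by linarith [hEpos n]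
      have hφc := hgood n hn
      exact ⟨pwmap_continuousOn h0c hct (hlf n).1 (hlg n).1 (hlg0 n),
        pwmap_strictMonoOn h0c hct (hlf n).2.1 (hlg n).2.1 (hlg0 n) hφc,
        pwmap_bijOn h0c hct (hlf n).2.1 (hlf n).2.2 (hlg n).2.1 (hlg n).2.2 hφc⟩
    · rw [hlam_bad n hn]
      exact ⟨continuousOn_id, strictMonoOn_id, Set.bijOn_id _⟩
  · -- lam → id uniformly on compacts
    intro T hT
    rw [Metric.tendstoUniformlyOn_iff]
    intro δ hδ
    have hδ4 : (0:ℝ) < δ/4 := by linarith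
    have hev1 : ∀ᶠ n in atTop, E n < t := hEtend.eventually_lt_const ht
    have hev2 : ∀ᶠ n in atTop, E n < δ/4 := hEtend.eventually_lt_const hδ4
    have hev3 : ∀ᶠ n in atTop, |tseq n - t| < δ/4 := hBtend.eventually_lt_const hδ4
    have hev4 := (Metric.tendstoUniformlyOn_iff.mp (hlfid t ht)) (δ/4) hδ4
    have hev5 := (Metric.tendstoUniformlyOn_iff.mp (hlgid T hT)) (δ/4) hδ4
    filter_upwards [hev1, hev2, hev3, hev4, hev5] with n h1 h2 h3 h4 h5
    intro s hs
    show dist (id s) (lam n s) < δ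
    rw [hlam_good n h1]
    have hs0 : (0:ℝ) ≤ s := hs.1
    have hsT : s ≤ T := hs.2
    have h0c : (0:ℝ) ≤ t - E n := by linarith
    have hEn := hEpos n
    by_cases hsc : s ≤ t - E n
    · rw [pwmap_left hsc]
      have h := h4 s ⟨hs0, by linarith⟩
      simp only [id_eq] at h ⊢
      linarith
    · by_cases hst : s ≤ t
      · rw [pwmap_mid hsc hst]
        push_neg at hsc
        have hlc_lt : lf n (t - E n) < tseq n := hgood n h1
        have hsl : 0 < (tseq n - lf n (t - E n)) / (t - (t - E n)) :=
          div_pos (by linarith) (by linarith)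
        have hlcb := h4 (t - E n) ⟨h0c, by linarith⟩
        simp only [id_eq, Real.dist_eq] at hlcb
        have habs := abs_lt.mp hlcb
        have htb := abs_lt.mp h3
        have hmid_le : lf n (t - E n) + (s - (t - E n)) * ((tseq n - lf n (t - E n)) / (t - (t - E n)))
            ≤ tseq n := by
          have hmul := mul_le_mul_of_nonneg_right
            (show s - (t - E n) ≤ t - (t - E n) by linarith) hsl.le
          have hkey : (t - (t - E n)) * ((tseq n - lf n (t - E n)) / (t - (t - E n)))
              = tseq n - lf n (t - E n) := by
            have hne : t - (t - E n) ≠ 0 := ne_of_gt (by linarith)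
            field_simp
          linarith
        have hmid_ge : lf n (t - E n)
            ≤ lf n (t - E n) + (s - (t - E n)) * ((tseq n - lf n (t - E n)) / (t - (t - E n))) := by
          have := mul_nonneg (show (0:ℝ) ≤ s - (t - E n) by linarith) hsl.le
          linarith
        simp only [id_eq]
        rw [Real.dist_eq, abs_lt]
        constructor
        · linarith [htb.1, htb.2, habs.1, habs.2]
        · linarith [htb.1, htb.2, habs.1, habs.2]
      · rw [pwmap_right hsc hst]
        push_neg at hst
        have hst0 : (0:ℝ) ≤ s - t := by linarith
        have h := h5 (s - t) ⟨hst0, by linarith⟩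
        simp only [id_eq, Real.dist_eq] at h
        have habs := abs_lt.mp h
        have htb := abs_lt.mp h3
        simp only [id_eq]
        rw [Real.dist_eq, abs_lt]
        constructor
        · linarith [htb.1, htb.2, habs.1, habs.2]
        · linarith [htb.1, htb.2, habs.1, habs.2]
  · -- glued functions converge uniformly on compacts
    intro T hT
    rw [Metric.tendstoUniformlyOn_iff]
    intro δ hδ
    have hδ4 : (0:ℝ) < δ/4 := by linarith
    set M := max T t with hMdef
    have hM : (0:ℝ) < M := lt_of_lt_of_le ht (le_max_right T t)
    have hTM : T ≤ M := le_max_left _ _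
    have htM : t ≤ M := le_max_right _ _
    have hev1 : ∀ᶠ n in atTop, E n < t := hEtend.eventually_lt_const ht
    have hev2 := (Metric.tendstoUniformlyOn_iff.mp (hlffun M hM)) (δ/4) hδ4
    have hev3 := (Metric.tendstoUniformlyOn_iff.mp (hlgfun M hM)) (δ/4) hδ4
    have hfl : Filter.Tendsto (fun n => f (t - E n)) atTop (nhds (Function.leftLim f t)) := by
      have hL := cadlag_tendsto_leftLim hf_cadlag ht
      apply hL.comp
      rw [tendsto_nhdsWithin_iff]
      constructor
      · have h : Filter.Tendsto (fun n => t - E n) atTop (nhds (t - 0)) :=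
          tendsto_const_nhds.sub hEtend
        simpa using h
      · exact Filter.Eventually.of_forall (fun n => show t - E n ∈ Set.Iio t by
          simp only [Set.mem_Iio]; linarith [hEpos n])
    have hev4 := (Metric.tendsto_nhds.mp hfl) (δ/4) hδ4
    have hev5 := (Metric.tendsto_nhds.mp hleft) (δ/4) hδ4
    filter_upwards [hev1, hev2, hev3, hev4, hev5] with n h1 h2 h3 h4 h5
    intro s hs
    show dist (glue f g t s) (glue (fseq n) (gseq n) (tseq n) (lam n s)) < δ
    rw [hlam_good n h1]
    have hs0 : (0:ℝ) ≤ s := hs.1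
    have hsT : s ≤ T := hs.2
    have h0c : (0:ℝ) ≤ t - E n := by linarith
    have hEn := hEpos n
    have hlc_lt : lf n (t - E n) < tseq n := hgood n h1
    have hlc0 : (0:ℝ) ≤ lf n (t - E n) := hlfmap n _ h0c
    by_cases hsc : s ≤ t - E n
    · rw [pwmap_left hsc]
      have hflt : lf n s < tseq n := by
        have := (hlf n).2.1.monotoneOn (Set.mem_Ici.mpr hs0) (Set.mem_Ici.mpr h0c) hsc
        linarith
      have hglue1 : glue (fseq n) (gseq n) (tseq n) (lf n s) = fseq n (lf n s) := by
        simp only [glue]; rw [if_pos hflt]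
      have hglue2 : glue f g t s = f s := by
        simp only [glue]; rw [if_pos (show s < t by linarith)]
      rw [hglue1, hglue2]
      have h := h2 s ⟨hs0, by linarith⟩
      linarith
    · by_cases hst : s ≤ t
      · by_cases hst' : s < t
        · rw [pwmap_mid hsc hst]
          push_neg at hsc
          have hsl : 0 < (tseq n - lf n (t - E n)) / (t - (t - E n)) :=
            div_pos (by linarith) (by linarith)
          set v := lf n (t - E n) + (s - (t - E n)) * ((tseq n - lf n (t - E n)) / (t - (t - E n)))
            with hvdef
          have hv_lt : v < tseq n := by
            have hmul := mul_lt_mul_of_pos_right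
              (show s - (t - E n) < t - (t - E n) by linarith) hsl
            have hkey : (t - (t - E n)) * ((tseq n - lf n (t - E n)) / (t - (t - E n)))
                = tseq n - lf n (t - E n) := by
              have hne : t - (t - E n) ≠ 0 := ne_of_gt (by linarith)
              field_simp
            rw [hvdef]; linarith
          have hv_ge : lf n (t - E n) ≤ v := by
            have := mul_nonneg (show (0:ℝ) ≤ s - (t - E n) by linarith) hsl.le
            rw [hvdef]; linarith
          have hv0 : (0:ℝ) ≤ v := le_trans hlc0 hv_ge
          have hglue1 : glue (fseq n) (gseq n) (tseq n) v = fseq n v := by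
            simp only [glue]; rw [if_pos hv_lt]
          have hglue2 : glue f g t s = f s := by
            simp only [glue]; rw [if_pos hst']
          rw [hglue1, hglue2]
          have hPC : fseq n v ≤ fseq n (lf n (t - E n)) :=
            hfseq_mono n (lf n (t - E n)) v hlc0 hv_ge
          have hLnP : Function.leftLim (fseq n) (tseq n) ≤ fseq n v :=
            leftLim_le_of_antitone (hfseq_cadlag n)
              (fun a b ha hab => hfseq_mono n a b ha hab) hv0 hv_lt
          have hLQ : Function.leftLim f t ≤ f s :=
            leftLim_le_of_antitone hf_cadlag hf_anti hs0 hst'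
          have hQD : f s ≤ f (t - E n) := hf_anti (t - E n) s h0c hsc.le
          have hCD := h2 (t - E n) ⟨h0c, by linarith⟩
          rw [Real.dist_eq] at hCD
          have h4' := h4
          rw [Real.dist_eq] at h4'
          have h5' := h5
          rw [Real.dist_eq] at h5'
          have a1 := abs_lt.mp hCD
          have a2 := abs_lt.mp h4'
          have a3 := abs_lt.mp h5'
          rw [Real.dist_eq, abs_lt]
          constructor
          · linarith [a1.1, a1.2, a2.1, a2.2, a3.1, a3.2]
          · linarith [a1.1, a1.2, a2.1, a2.2, a3.1, a3.2]
        · have hseq : s = t := le_antisymm hst (not_lt.mp hst')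
          rw [hseq]
          rw [show pwmap (lf n) (lg n) (t - E n) t (tseq n) t = tseq n from
            pwmap_at_right (by linarith) (hlg0 n)]
          have hglue1 : glue (fseq n) (gseq n) (tseq n) (tseq n) = gseq n 0 := by
            simp only [glue]
            rw [if_neg (lt_irrefl _), sub_self]
          have hglue2 : glue f g t t = g 0 := by
            simp only [glue]
            rw [if_neg (lt_irrefl _), sub_self]
          rw [hglue1, hglue2]
          have h := h3 0 ⟨le_rfl, hM.le⟩
          rw [hlg0 n] at h
          linarith
      · rw [pwmap_right hsc hst]
        push_neg at hst
        have hst0 : (0:ℝ) ≤ s - t := by linarith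
        have hlgst : (0:ℝ) ≤ lg n (s - t) := hlgmap n _ hst0
        have hglue1 : glue (fseq n) (gseq n) (tseq n) (tseq n + lg n (s - t))
            = gseq n (lg n (s - t)) := by
          simp only [glue]
          rw [if_neg (not_lt.mpr (by linarith : tseq n ≤ tseq n + lg n (s - t)))]
          congr 1
          ring
        have hglue2 : glue f g t s = g (s - t) := by
          simp only [glue]
          rw [if_neg (not_lt.mpr hst.le)]
        rw [hglue1, hglue2]
        have h := h3 (s - t) ⟨hst0, by linarith⟩
        linarith
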